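/- arXiv:1203.4767 — 3 statements merged into one kernel-verified Lean document; each statement's English description precedes it below -/
import Mathlib

section
/- Let 𝔨 be a finite-dimensional real Lie algebra with an invariant inner product, and let h : 𝔨 → ℝ be a C², infinitesimally Ad-invariant function, with gradient grad h and Hessian H(Y) (the derivative of grad h at Y). Then for all Y, V ∈ 𝔨 one has ⁅Y, H(Y)V⁆ = ⁅grad h(Y), V⁆; that is, ad_{u(Y)} = ad_Y ∘ H(Y) where u(Y) = grad h(Y). -/
open RealInnerProductSpace

/-- **`ad_{u(Y)} = ad_Y ∘ H(Y)` for an Ad-invariant complexifier.**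
Let `𝔨` be a finite-dimensional real Lie algebra (with bilinear antisymmetric bracket `l`
satisfying the Jacobi identity) carrying an invariant inner product, and let `h : 𝔨 → ℝ`
be a `C²`, infinitesimally Ad-invariant function with gradient `grad h` and Hessian
`H(Y) = D(grad h)(Y)`. Then `⁅Y, H(Y)V⁆ = ⁅grad h(Y), V⁆` for all `Y, V`. -/
theorem bracket_hessian_eq_bracket_gradient_of_adInvariant
    {E : Type*} [NormedAddCommGroup E] [InnerProductSpace ℝ E] [FiniteDimensional ℝ E]
    (l : E →ₗ[ℝ] E →ₗ[ℝ] E)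
    (hanti : ∀ X Y : E, l X Y = -l Y X)
    (hjacobi : ∀ X Y Z : E, l X (l Y Z) = l (l X Y) Z + l Y (l X Z))
    (hinv : ∀ X Y Z : E, ⟪l X Y, Z⟫ + ⟪Y, l X Z⟫ = 0)
    (h : E → ℝ) (hh : ContDiff ℝ 2 h)
    (hAd : ∀ X Y : E, ⟪gradient h Y, l X Y⟫ = 0) :
    ∀ Y V : E, l Y (fderiv ℝ (gradient h) Y V) = l (gradient h Y) V := by
  intro Y V
  -- gradient h is differentiable
  have hgrad : gradient h = fun y => (InnerProductSpace.toDual ℝ E).symm (fderiv ℝ h y) := rfl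
  have hf1 : ContDiff ℝ 1 (fderiv ℝ h) := by
    have := hh.fderiv_right (m := 1) (by norm_num)
    exact this
  have hdg : Differentiable ℝ (gradient h) := by
    rw [hgrad]
    exact fun x =>
      ((InnerProductSpace.toDual ℝ E).symm.differentiable.differentiableAt).comp x
        (hf1.differentiable one_ne_zero x)
  -- key derivative identity
  have key : ∀ X : E, ⟪fderiv ℝ (gradient h) Y V, l X Y⟫ + ⟪gradient h Y, l X V⟫ = 0 := by
    intro X
    have hF : HasFDerivAt (fun y => ⟪gradient h y, l X y⟫)
        ((fderivInnerCLM ℝ (gradient h Y, l X Y)).comp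
          ((fderiv ℝ (gradient h) Y).prod (l X).toContinuousLinearMap)) Y :=
      (hdg Y).hasFDerivAt.inner ℝ (l X).toContinuousLinearMap.hasFDerivAt
    have hzero : (fun y => ⟪gradient h y, l X y⟫) = fun _ => (0 : ℝ) := by
      funext y; exact hAd X y
    have h0 : HasFDerivAt (fun y => ⟪gradient h y, l X y⟫) (0 : E →L[ℝ] ℝ) Y := by
      rw [hzero]; exact hasFDerivAt_const (0:ℝ) Y
    have := hF.unique h0
    have hV := congrArg (fun L => L V) this
    simpa [fderivInnerCLM, real_inner_comm, add_comm] using hV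
  -- now prove equality via inner products
  apply ext_inner_right ℝ
  intro X
  have h1 : ⟪l Y (fderiv ℝ (gradient h) Y V), X⟫
      = ⟪fderiv ℝ (gradient h) Y V, l X Y⟫ := by
    have := hinv Y (fderiv ℝ (gradient h) Y V) X
    have h2 : l Y X = -l X Y := hanti Y X
    rw [h2] at this
    simp only [inner_neg_right] at this
    linarith
  have h3 : ⟪l (gradient h Y) V, X⟫ = - ⟪gradient h Y, l X V⟫ := by
    have ha := hinv (gradient h Y) V X
    have hb := hinv X (gradient h Y) V
    have hc : l (gradient h Y) X = -l X (gradient h Y) := hanti _ X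
    rw [hc] at ha
    simp only [inner_neg_right] at ha
    have hd : ⟪V, l X (gradient h Y)⟫ = ⟪l X (gradient h Y), V⟫ := real_inner_comm _ _
    linarith
  have := key X
  rw [h1, h3]
  linarith
end

section
/- Let 𝔨 be a finite-dimensional real Lie algebra with an invariant inner product, and let h : 𝔨 → ℝ be a C², infinitesimally Ad-invariant function, with gradient grad h and Hessian H(Y). Then for all X, Y ∈ 𝔨 one has H(Y)(⁅X,Y⁆) = ⁅X, grad h(Y)⁆; that is, ad_{u(Y)} = H(Y) ∘ ad_Y where u(Y) = grad h(Y). -/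
open RealInnerProductSpace

/-- **`ad_{u(Y)} = H(Y) ∘ ad_Y` for an Ad-invariant complexifier.**
Let `𝔨` be a finite-dimensional real Lie algebra (with bilinear antisymmetric bracket `l`
satisfying the Jacobi identity) carrying an invariant inner product, and let `h : 𝔨 → ℝ`
be a `C²`, infinitesimally Ad-invariant function with gradient `grad h` and Hessian
`H(Y) = D(grad h)(Y)`. Then `H(Y)(⁅X,Y⁆) = ⁅X, grad h(Y)⁆` for all `X, Y`. -/
theorem hessian_bracket_eq_bracket_gradient_of_adInvariant
    {E : Type*} [NormedAddCommGroup E] [InnerProductSpace ℝ E] [FiniteDimensional ℝ E]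
    (l : E →ₗ[ℝ] E →ₗ[ℝ] E)
    (hanti : ∀ X Y : E, l X Y = -l Y X)
    (hjacobi : ∀ X Y Z : E, l X (l Y Z) = l (l X Y) Z + l Y (l X Z))
    (hinv : ∀ X Y Z : E, ⟪l X Y, Z⟫ + ⟪Y, l X Z⟫ = 0)
    (h : E → ℝ) (hh : ContDiff ℝ 2 h)
    (hAd : ∀ X Y : E, ⟪gradient h Y, l X Y⟫ = 0) :
    ∀ X Y : E, fderiv ℝ (gradient h) Y (l X Y) = l X (gradient h Y) := by
  intro X Y
  have hd : Differentiable ℝ h := hh.differentiable two_ne_zero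
  have hf1 : ContDiff ℝ 1 (fderiv ℝ h) := hh.fderiv_right (by norm_num)
  have hfd : Differentiable ℝ (fderiv ℝ h) := hf1.differentiable one_ne_zero
  set L : (E →L[ℝ] ℝ) →L[ℝ] E :=
    (InnerProductSpace.toDual ℝ E).symm.toContinuousLinearEquiv.toContinuousLinearMap with hL
  have hgL : gradient h = fun y => L (fderiv ℝ h y) := rfl
  -- derivative of the gradient
  have hgrad_fd : ∀ Z, fderiv ℝ (gradient h) Y Z = L (fderiv ℝ (fderiv ℝ h) Y Z) := by
    intro Z
    have hF : HasFDerivAt (gradient h) (L.comp (fderiv ℝ (fderiv ℝ h) Y)) Y := by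
      rw [hgL]
      exact L.hasFDerivAt.comp Y (hfd Y).hasFDerivAt
    rw [hF.fderiv]; rfl
  have hgdiff : Differentiable ℝ (gradient h) := by
    rw [hgL]; exact fun y => L.differentiableAt.comp y (hfd y)
  -- inner product with the Hessian equals second derivative
  have hinner : ∀ Z W : E, ⟪fderiv ℝ (gradient h) Y Z, W⟫ = fderiv ℝ (fderiv ℝ h) Y Z W := by
    intro Z W
    rw [hgrad_fd]
    exact InnerProductSpace.toDual_symm_apply
  -- symmetry of the second derivative
  have hsymm : ∀ Z W : E, ⟪fderiv ℝ (gradient h) Y Z, W⟫ = ⟪fderiv ℝ (gradient h) Y W, Z⟫ := by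
    intro Z W
    rw [hinner, hinner]
    exact second_derivative_symmetric (fun y => (hd y).hasFDerivAt) (hfd Y).hasFDerivAt Z W
  -- differentiate the invariance identity
  have hkey : ∀ Z : E, ⟪fderiv ℝ (gradient h) Y Z, l X Y⟫ + ⟪gradient h Y, l X Z⟫ = 0 := by
    intro Z
    have hlX : Differentiable ℝ fun y : E => l X y :=
      (LinearMap.toContinuousLinearMap (l X)).differentiable
    have hlX_fd : fderiv ℝ (fun y : E => l X y) Y Z = l X Z := by
      have : HasFDerivAt (fun y : E => l X y) (LinearMap.toContinuousLinearMap (l X)) Y :=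
        (LinearMap.toContinuousLinearMap (l X)).hasFDerivAt
      rw [this.fderiv]; rfl
    have hzero : (fun y : E => ⟪gradient h y, l X y⟫) = fun _ => (0 : ℝ) :=
      funext fun y => hAd X y
    have h0 : fderiv ℝ (fun y : E => ⟪gradient h y, l X y⟫) Y Z = 0 := by
      rw [hzero, fderiv_fun_const]; rfl
    rw [fderiv_inner_apply (𝕜 := ℝ) (hgdiff Y) (hlX Y) Z, hlX_fd] at h0
    linarith [h0]
  -- conclude
  apply ext_inner_right ℝ
  intro Z
  rw [hsymm]
  have h1 := hkey Z
  have h2 := hinv X (gradient h Y) Z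
  have h3 : ⟪l X (gradient h Y), Z⟫ = ⟪Z, l X (gradient h Y)⟫ := real_inner_comm _ _
  linarith [h1, h2, h3]
end

section
/- Let E be a finite-dimensional real inner product space, h : E → ℝ a C² function whose Hessian H(Y) is positive definite at every point, and g : E → E a surjective linear isometry with h ∘ g = h. Then for every real constant τ₂, the density function D(Y) = exp(−2τ₂(⟪Y, grad h(Y)⟫ − h(Y))) · √(det H(Y)) is g-invariant: D(g(Y)) = D(Y) for every Y ∈ E. -/
open RealInnerProductSpace

/-- **Invariance of the density of the measure `dμ_τ`.**
Let `E` be a finite-dimensional real inner product space, `h : E → ℝ` a `C²` function whose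
Hessian `H(Y)` (the derivative of `grad h` at `Y`) is positive definite at every point, and
`g : E → E` a surjective linear isometry with `h ∘ g = h`. Then for every real `τ₂`, the
density `D(Y) = exp(−2τ₂(⟪Y, grad h(Y)⟫ − h(Y))) · √(det H(Y))` satisfies
`D(g(Y)) = D(Y)` for all `Y`. -/
theorem density_invariant_of_isometry_invariant
    {E : Type*} [NormedAddCommGroup E] [InnerProductSpace ℝ E] [FiniteDimensional ℝ E]
    (h : E → ℝ) (hh : ContDiff ℝ 2 h)
    (hpos : ∀ Y v : E, v ≠ 0 → 0 < ⟪v, fderiv ℝ (gradient h) Y v⟫)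
    (g : E →ₗᵢ[ℝ] E) (hg : Function.Surjective g)
    (hinv : ∀ Y : E, h (g Y) = h Y) (τ₂ : ℝ) :
    ∀ Y : E,
      Real.exp (-(2 * τ₂ * (⟪g Y, gradient h (g Y)⟫ - h (g Y)))) *
          Real.sqrt (LinearMap.det ((fderiv ℝ (gradient h) (g Y) : E →L[ℝ] E) : E →ₗ[ℝ] E)) =
        Real.exp (-(2 * τ₂ * (⟪Y, gradient h Y⟫ - h Y))) *
          Real.sqrt (LinearMap.det ((fderiv ℝ (gradient h) Y : E →L[ℝ] E) : E →ₗ[ℝ] E)) := by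
  intro Y
  have hdiff : Differentiable ℝ h := hh.differentiable (by norm_num)
  -- fderiv of gradient data
  have hdg : Differentiable ℝ (gradient h) := by
    have h1 : Differentiable ℝ (fderiv ℝ h) :=
      (hh.fderiv_right (m := 1) (by norm_num)).differentiable one_ne_zero
    exact ((InnerProductSpace.toDual ℝ E).symm.toContinuousLinearEquiv.differentiable).comp h1
  set G : E ≃ₗᵢ[ℝ] E := LinearIsometryEquiv.ofSurjective g hg with hGdef
  have hGcoe : ∀ x, G x = g x := fun x =>
    congrFun (LinearIsometryEquiv.coe_ofSurjective g hg) x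
  -- key: fderiv ℝ h Z v = ⟪gradient h Z, v⟫
  have hkey : ∀ (Z v : E), fderiv ℝ h Z v = ⟪gradient h Z, v⟫ := by
    intro Z v
    rw [(hdiff Z).hasGradientAt.hasFDerivAt.fderiv]
    exact InnerProductSpace.toDual_apply_apply
  -- chain rule for h ∘ g
  have hfd : ∀ (Z : E), fderiv ℝ h Z =
      (fderiv ℝ h (g Z)).comp g.toContinuousLinearMap := by
    intro Z
    have hcomp : h = fun y => h (g y) := funext fun y => (hinv y).symm
    conv_lhs => rw [hcomp]
    have : (fun y => h (g y)) = h ∘ ⇑g.toContinuousLinearMap := rfl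
    rw [this, fderiv_comp Z (hdiff _) (g.toContinuousLinearMap.differentiableAt),
      ContinuousLinearMap.fderiv]
    rfl
  -- gradient equivariance
  have hgrad : ∀ Z : E, gradient h (g Z) = g (gradient h Z) := by
    intro Z
    have : ∀ v : E, ⟪gradient h (g Z), g v⟫ = ⟪g (gradient h Z), g v⟫ := by
      intro v
      rw [g.inner_map_map]
      have h1 : fderiv ℝ h Z v = ⟪gradient h (g Z), g v⟫ := by
        rw [hfd Z]; exact hkey (g Z) (g v)
      rw [← h1, hkey]
    apply ext_inner_right ℝ
    intro w
    obtain ⟨v, rfl⟩ := hg w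
    exact this v
  -- inner product term
  have hinner : ⟪g Y, gradient h (g Y)⟫ = ⟪Y, gradient h Y⟫ := by
    rw [hgrad Y, g.inner_map_map]
  -- Hessian conjugation
  have hfun : (fun z => gradient h (g z)) = (fun z => g (gradient h z)) :=
    funext hgrad
  have hHl : fderiv ℝ (fun z => gradient h (g z)) Y =
      (fderiv ℝ (gradient h) (g Y)).comp g.toContinuousLinearMap := by
    have : (fun z => gradient h (g z)) = gradient h ∘ ⇑g.toContinuousLinearMap := rfl
    rw [this, fderiv_comp Y (hdg _) (g.toContinuousLinearMap.differentiableAt),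
      ContinuousLinearMap.fderiv]
    rfl
  have hHr : fderiv ℝ (fun z => g (gradient h z)) Y =
      g.toContinuousLinearMap.comp (fderiv ℝ (gradient h) Y) := by
    have : (fun z => g (gradient h z)) = ⇑g.toContinuousLinearMap ∘ gradient h := rfl
    rw [this, fderiv_comp Y (g.toContinuousLinearMap.differentiableAt) (hdg Y),
      ContinuousLinearMap.fderiv]
  have hcomm : (fderiv ℝ (gradient h) (g Y)).comp g.toContinuousLinearMap =
      g.toContinuousLinearMap.comp (fderiv ℝ (gradient h) Y) := by
    rw [← hHl, ← hHr, hfun]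
  -- as linear maps
  have hdet : LinearMap.det ((fderiv ℝ (gradient h) (g Y) : E →L[ℝ] E) : E →ₗ[ℝ] E) =
      LinearMap.det ((fderiv ℝ (gradient h) Y : E →L[ℝ] E) : E →ₗ[ℝ] E) := by
    have hconj : ((fderiv ℝ (gradient h) (g Y) : E →L[ℝ] E) : E →ₗ[ℝ] E) =
        (G.toLinearEquiv : E →ₗ[ℝ] E) ∘ₗ
          ((fderiv ℝ (gradient h) Y : E →L[ℝ] E) : E →ₗ[ℝ] E) ∘ₗ
          (G.toLinearEquiv.symm : E →ₗ[ℝ] E) := by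
      apply LinearMap.ext
      intro v
      have h2 := ContinuousLinearMap.ext_iff.mp hcomm (G.symm v)
      simp only [ContinuousLinearMap.coe_comp', Function.comp_apply,
        LinearIsometry.coe_toContinuousLinearMap] at h2
      simp only [LinearMap.coe_comp, Function.comp_apply, ContinuousLinearMap.coe_coe,
        LinearEquiv.coe_coe, LinearIsometryEquiv.coe_toLinearEquiv]
      have h3 : g (G.symm v) = v := by
        rw [← hGcoe, G.apply_symm_apply]
      rw [h3] at h2
      rw [h2, hGcoe]
      rfl
    rw [hconj, LinearMap.det_conj]
  rw [hinner, hinv, hdet]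
end
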